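/- Every d×d complex unitary matrix U can be written as U = O₁ D O₂, where O₁ and O₂ are d×d real orthogonal matrices (regarded as complex matrices) and D is a diagonal unitary matrix, i.e., a diagonal complex matrix all of whose diagonal entries have modulus 1. -/

import Mathlib

open Matrix

noncomputable section

private lemma column_eigen' {d : ℕ} (X : Matrix (Fin d) (Fin d) ℝ)
    (b : OrthonormalBasis (Fin d) ℝ (EuclideanSpace ℝ (Fin d)))
    (ν : Fin d → ℝ) (h : ∀ a, Matrix.toEuclideanLin X (b a) = ν a • b a) :
    X * (EuclideanSpace.basisFun (Fin d) ℝ).toBasis.toMatrix b.toBasis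
      = (EuclideanSpace.basisFun (Fin d) ℝ).toBasis.toMatrix b.toBasis * Matrix.diagonal ν := by
  have key : ∀ a, X *ᵥ ⇑(b a) = ν a • ⇑(b a) := by
    intro a
    simpa only [Matrix.toEuclideanLin_apply, WithLp.ofLp_smul] using congr(⇑$(h a))
  ext i j
  rw [Matrix.mul_diagonal]
  have hOapp : ∀ i j, (EuclideanSpace.basisFun (Fin d) ℝ).toBasis.toMatrix b.toBasis i j = b j i :=
    fun i j => rfl
  have := congrFun (key j) i
  simp only [Pi.smul_apply, smul_eq_mul] at this
  calc (X * (EuclideanSpace.basisFun (Fin d) ℝ).toBasis.toMatrix b.toBasis) i j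
      = (X *ᵥ ⇑(b j)) i := by
        simp only [Matrix.mul_apply, Matrix.mulVec, dotProduct]
        exact Finset.sum_congr rfl fun k _ => rfl
    _ = ν j * b j i := this
    _ = _ := by rw [hOapp, mul_comm]

private lemma joint_diag' {d : ℕ} (X Y : Matrix (Fin d) (Fin d) ℝ)
    (hX : X.IsHermitian) (hY : Y.IsHermitian) (hXY : X * Y = Y * X) :
    ∃ (O : Matrix (Fin d) (Fin d) ℝ) (μ ν : Fin d → ℝ),
      O ∈ Matrix.orthogonalGroup (Fin d) ℝ ∧
      X * O = O * Matrix.diagonal μ ∧ Y * O = O * Matrix.diagonal ν := by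
  classical
  have hA : (Matrix.toEuclideanLin X).IsSymmetric := Matrix.isHermitian_iff_isSymmetric.mp hX
  have hB : (Matrix.toEuclideanLin Y).IsSymmetric := Matrix.isHermitian_iff_isSymmetric.mp hY
  have hmul : ∀ (M N : Matrix (Fin d) (Fin d) ℝ),
      Matrix.toEuclideanLin (M * N) = Matrix.toEuclideanLin M * Matrix.toEuclideanLin N := by
    intro M N
    ext v
    simp [Matrix.toEuclideanLin_apply, Matrix.mulVec_mulVec, Module.End.mul_apply]
  have hcomm : Commute (Matrix.toEuclideanLin X) (Matrix.toEuclideanLin Y) := by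
    unfold Commute SemiconjBy
    rw [← hmul, ← hmul, hXY]
  have hInt := LinearMap.IsSymmetric.directSum_isInternal_of_commute hA hB hcomm
  set V : ℝ × ℝ → Submodule ℝ (EuclideanSpace ℝ (Fin d)) := fun i =>
    Module.End.eigenspace (Matrix.toEuclideanLin X) i.2 ⊓
      Module.End.eigenspace (Matrix.toEuclideanLin Y) i.1 with hV
  have hIndep : iSupIndep V := hInt.submodule_iSupIndep
  have : Fintype {i // V i ≠ ⊥} := hIndep.fintypeNeBotOfFiniteDimensional
  have hInt' : DirectSum.IsInternal (fun i : {i // V i ≠ ⊥} => V i) :=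
    DirectSum.isInternal_ne_bot_iff.mpr hInt
  have hFam := LinearMap.IsSymmetric.orthogonalFamily_eigenspace_inf_eigenspace hA hB
  have hFam' : OrthogonalFamily ℝ (fun i : {i // V i ≠ ⊥} => V i)
      (fun i => (V i).subtypeₗᵢ) := hFam.comp Subtype.coe_injective
  have hn : Module.finrank ℝ (EuclideanSpace ℝ (Fin d)) = d := finrank_euclideanSpace_fin
  set b := hInt'.subordinateOrthonormalBasis hn hFam' with hb
  set idx := fun a => hInt'.subordinateOrthonormalBasisIndex hn a hFam' with hidx
  have hsub : ∀ a, b a ∈ V (idx a) := fun a =>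
    hInt'.subordinateOrthonormalBasis_subordinate hn a hFam'
  refine ⟨(EuclideanSpace.basisFun (Fin d) ℝ).toBasis.toMatrix b.toBasis,
    fun a => ((idx a : {i // V i ≠ ⊥}) : ℝ × ℝ).2, fun a => ((idx a :  {i // V i ≠ ⊥}) : ℝ × ℝ).1,
    (EuclideanSpace.basisFun (Fin d) ℝ).toMatrix_orthonormalBasis_mem_unitary b, ?_, ?_⟩
  · exact column_eigen' X b _ fun a => Module.End.mem_eigenspace_iff.mp (hsub a).1
  · exact column_eigen' Y b _ fun a => Module.End.mem_eigenspace_iff.mp (hsub a).2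

private lemma map_ofReal_inj {d : ℕ} {M N : Matrix (Fin d) (Fin d) ℝ}
    (h : M.map (Complex.ofReal : ℝ → ℂ) = N.map Complex.ofReal) : M = N := by
  ext i j
  have := congrFun (congrFun h i) j
  simp only [Matrix.map_apply] at this
  exact_mod_cast this

private lemma map_ofReal_mul {d : ℕ} (M N : Matrix (Fin d) (Fin d) ℝ) :
    (M * N).map (Complex.ofReal : ℝ → ℂ) = M.map Complex.ofReal * N.map Complex.ofReal := by
  ext i j
  simp [Matrix.mul_apply, Matrix.map_apply]

private lemma map_ofReal_one {d : ℕ} :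
    ((1 : Matrix (Fin d) (Fin d) ℝ)).map (Complex.ofReal : ℝ → ℂ) = 1 := by
  ext i j
  by_cases hij : i = j <;> simp [Matrix.one_apply, hij]


/-- **Orthogonal–diagonal–orthogonal decomposition of unitaries.**
Every `d×d` complex unitary `U` can be written as `U = O₁ D O₂` with `O₁, O₂` real
orthogonal and `D` a diagonal unitary (diagonal, all diagonal entries of modulus 1). -/
theorem unitary_eq_orthogonal_diagonal_orthogonal
    (d : ℕ) (U : Matrix (Fin d) (Fin d) ℂ) (hU : U ∈ Matrix.unitaryGroup (Fin d) ℂ) :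
    ∃ (O₁ O₂ : Matrix (Fin d) (Fin d) ℝ) (D : Matrix (Fin d) (Fin d) ℂ),
      O₁ ∈ Matrix.orthogonalGroup (Fin d) ℝ ∧ O₂ ∈ Matrix.orthogonalGroup (Fin d) ℝ ∧
      D.IsDiag ∧ (∀ i, ‖D i i‖ = 1) ∧
      U = O₁.map Complex.ofReal * D * O₂.map Complex.ofReal := by
  classical
  have hU1 : U * star U = 1 := (Matrix.mem_unitaryGroup_iff).mp hU
  have hU2 : star U * U = 1 := (Matrix.mem_unitaryGroup_iff').mp hU
  set S := U * Uᵀ with hSdef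
  have hSsym : Sᵀ = S := by
    rw [hSdef, Matrix.transpose_mul, Matrix.transpose_transpose]
  have hTs : ∀ (M : Matrix (Fin d) (Fin d) ℂ), star (Mᵀ) = (star M)ᵀ := fun M => by
    ext i j; rfl
  have hstarS : star S = S.map (starRingEnd ℂ) := by
    rw [Matrix.star_eq_conjTranspose, Matrix.conjTranspose, hSsym]; rfl
  have hS1 : S * S.map (starRingEnd ℂ) = 1 := by
    rw [← hstarS, hSdef, Matrix.star_mul, hTs]
    calc U * Uᵀ * ((star U)ᵀ * star U)
        = U * ((star U * U)ᵀ * star U) := by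
          rw [Matrix.transpose_mul, mul_assoc, mul_assoc]
      _ = 1 := by rw [hU2, Matrix.transpose_one, one_mul, hU1]
  set X := S.map Complex.re with hXdef
  set Y := S.map Complex.im with hYdef
  -- symmetry
  have hXsym : X.IsHermitian := by
    ext i j
    have := congrFun (congrFun hSsym i) j
    simp only [Matrix.transpose_apply] at this
    simp [Matrix.conjTranspose_apply, hXdef, Matrix.map_apply, this]
  have hYsym : Y.IsHermitian := by
    ext i j
    have := congrFun (congrFun hSsym i) j
    simp only [Matrix.transpose_apply] at this
    simp [Matrix.conjTranspose_apply, hYdef, Matrix.map_apply, this]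
  -- the two real identities
  have hsq : X * X + Y * Y = 1 := by
    ext i j
    have h := congrFun (congrFun hS1 i) j
    rw [Matrix.mul_apply] at h
    have h2 := congrArg Complex.re h
    simp only [Complex.re_sum, Matrix.map_apply, Complex.mul_re, Complex.conj_re,
      Complex.conj_im, mul_neg, sub_neg_eq_add] at h2
    simp only [Matrix.add_apply, Matrix.mul_apply, Matrix.map_apply, Matrix.one_apply]
    rw [← Finset.sum_add_distrib]
    have e0 : ∑ x, (X i x * X x j + Y i x * Y x j)
        = ∑ x, ((S i x).re * (S x j).re + (S i x).im * (S x j).im) :=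
      Finset.sum_congr rfl fun _ _ => rfl
    rw [e0, h2]
    by_cases hij : i = j <;> simp [hij, Matrix.one_apply]
  have hcm : X * Y = Y * X := by
    ext i j
    have h := congrFun (congrFun hS1 i) j
    rw [Matrix.mul_apply] at h
    have h2 := congrArg Complex.im h
    simp only [Complex.im_sum, Matrix.map_apply, Complex.mul_im, Complex.conj_re,
      Complex.conj_im, mul_neg] at h2
    have h3 : ((1 : Matrix (Fin d) (Fin d) ℂ) i j).im = 0 := by
      by_cases hij : i = j <;> simp [Matrix.one_apply, hij]
    rw [h3, Finset.sum_add_distrib] at h2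
    have h5 : ∑ x, -((S i x).re * (S x j).im) = -∑ x, ((S i x).re * (S x j).im) :=
      Finset.sum_neg_distrib _
    rw [h5] at h2
    rw [Matrix.mul_apply, Matrix.mul_apply]
    have e1 : ∑ x, X i x * Y x j = ∑ x, (S i x).re * (S x j).im :=
      Finset.sum_congr rfl fun _ _ => rfl
    have e2 : ∑ x, Y i x * X x j = ∑ x, (S i x).im * (S x j).re :=
      Finset.sum_congr rfl fun _ _ => rfl
    rw [e1, e2]
    linarith
  -- joint diagonalization
  obtain ⟨O, μ, ν, hOmem, hXO, hYO⟩ := joint_diag' X Y hXsym hYsym hcm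
  have hstarO : star O = Oᵀ := by
    rw [Matrix.star_eq_conjTranspose]; ext i j; simp [Matrix.conjTranspose_apply]
  have hOOt : O * Oᵀ = 1 := by
    rw [← hstarO]; exact (Matrix.mem_orthogonalGroup_iff _ _).mp hOmem
  have hOtO : Oᵀ * O = 1 := mul_eq_one_comm.mp hOOt
  -- unimodularity of μ + iν
  have hdiag1 : Matrix.diagonal (fun j => μ j * μ j + ν j * ν j) = 1 := by
    have e1 : O * Matrix.diagonal (fun j => μ j * μ j + ν j * ν j) = O := by
      have : X * (X * O) + Y * (Y * O) = O := by
        rw [← mul_assoc, ← mul_assoc, ← Matrix.add_mul, hsq, one_mul]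
      rw [hXO, hYO, ← mul_assoc, ← mul_assoc, hXO, hYO, mul_assoc, mul_assoc,
        Matrix.diagonal_mul_diagonal, Matrix.diagonal_mul_diagonal, ← Matrix.mul_add,
        Matrix.diagonal_add] at this
      exact this
    calc Matrix.diagonal (fun j => μ j * μ j + ν j * ν j)
        = Oᵀ * (O * Matrix.diagonal (fun j => μ j * μ j + ν j * ν j)) := by
          rw [← mul_assoc, hOtO, one_mul]
      _ = Oᵀ * O := by rw [e1]
      _ = 1 := hOtO
  have hmod : ∀ j, μ j ^ 2 + ν j ^ 2 = 1 := by
    intro j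
    have := congrFun (congrFun hdiag1 j) j
    simpa [Matrix.diagonal_apply_eq, Matrix.one_apply, sq] using this
  -- complexify
  set Oc := O.map (Complex.ofReal : ℝ → ℂ) with hOcdef
  set lam : Fin d → ℂ := fun j => (μ j : ℂ) + Complex.I * (ν j : ℂ) with hlamdef
  have hSdec : S = X.map Complex.ofReal + Complex.I • Y.map Complex.ofReal := by
    ext i j
    simp only [Matrix.add_apply, Matrix.smul_apply, Matrix.map_apply, hXdef, hYdef,
      smul_eq_mul]
    rw [mul_comm]
    exact (Complex.re_add_im _).symm
  have hSOc : S * Oc = Oc * Matrix.diagonal lam := by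
    rw [hSdec, Matrix.add_mul, Matrix.smul_mul, ← map_ofReal_mul, ← map_ofReal_mul, hXO, hYO,
      map_ofReal_mul, map_ofReal_mul]
    have hdx : (Matrix.diagonal μ).map (Complex.ofReal : ℝ → ℂ)
        = Matrix.diagonal (fun j => (μ j : ℂ)) := Matrix.diagonal_map (by simp)
    have hdy : (Matrix.diagonal ν).map (Complex.ofReal : ℝ → ℂ)
        = Matrix.diagonal (fun j => (ν j : ℂ)) := Matrix.diagonal_map (by simp)
    rw [hdx, hdy, ← mul_smul_comm, ← Matrix.mul_add]
    congr 1
    ext i k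
    by_cases h : i = k <;>
      simp [Matrix.diagonal_apply, h, hlamdef]
  -- Oc unitary facts
  have hOct : Ocᵀ = Oᵀ.map (Complex.ofReal : ℝ → ℂ) := (Matrix.transpose_map).symm
  have hOcOct : Oc * Ocᵀ = 1 := by
    rw [hOct, hOcdef, ← map_ofReal_mul, hOOt, map_ofReal_one]
  -- modulus of lam and square roots
  have hlam_re : ∀ j, (lam j).re = μ j ∧ (lam j).im = ν j := by
    intro j; constructor <;> simp [hlamdef]
  have hlamabs : ∀ j, ‖lam j‖ = 1 := by
    intro j
    have hns : Complex.normSq (lam j) = 1 := by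
      rw [Complex.normSq_apply, (hlam_re j).1, (hlam_re j).2]
      nlinarith [hmod j]
    rw [Complex.norm_def, hns, Real.sqrt_one]
  have hz : ∀ j, ∃ w : ℂ, w ^ 2 = lam j := fun j =>
    IsAlgClosed.exists_pow_nat_eq (lam j) two_pos
  choose z hz2 using hz
  have hzabs : ∀ j, ‖z j‖ = 1 := by
    intro j
    have h1 : ‖z j‖ ^ 2 = 1 := by
      rw [← norm_pow, hz2, hlamabs]
    nlinarith [norm_nonneg (z j), h1]
  have hzz : ∀ j, z j * z j = lam j := fun j => by rw [← sq, hz2]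
  have hzstar : ∀ j, z j * star (z j) = 1 := by
    intro j
    have h1 := Complex.mul_conj (z j)
    rw [Complex.normSq_eq_norm_sq, hzabs] at h1
    simpa using h1
  set Dm := Matrix.diagonal z with hDm
  set W := Oc * Dm with hW
  have hDmT : Dmᵀ = Dm := Matrix.diagonal_transpose z
  have hDmDm : Dm * Dm = Matrix.diagonal lam := by
    rw [hDm, Matrix.diagonal_mul_diagonal]
    exact congrArg _ (funext hzz)
  have hWWt : W * Wᵀ = S := by
    rw [hW, Matrix.transpose_mul, hDmT]
    calc Oc * Dm * (Dm * Ocᵀ) = Oc * (Dm * Dm) * Ocᵀ := by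
          rw [mul_assoc, mul_assoc, ← mul_assoc Dm]
      _ = Oc * Matrix.diagonal lam * Ocᵀ := by rw [hDmDm]
      _ = S * Oc * Ocᵀ := by rw [← hSOc]
      _ = S := by rw [mul_assoc, hOcOct, mul_one]
  have hDmH : Dmᴴ = Matrix.diagonal (fun j => star (z j)) := by
    rw [hDm, Matrix.diagonal_conjTranspose]
    rfl
  have hOcH : Ocᴴ = Ocᵀ := by
    ext i j
    simp [Matrix.conjTranspose_apply, hOcdef, Matrix.map_apply, Complex.conj_ofReal]
  have hWH : Wᴴ = Matrix.diagonal (fun j => star (z j)) * Ocᵀ := by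
    rw [hW, Matrix.conjTranspose_mul, hDmH, hOcH]
  have hWWH : W * Wᴴ = 1 := by
    rw [hWH, hW]
    calc Oc * Dm * (Matrix.diagonal (fun j => star (z j)) * Ocᵀ)
        = Oc * (Dm * Matrix.diagonal (fun j => star (z j))) * Ocᵀ := by
          rw [mul_assoc, mul_assoc, ← mul_assoc Dm]
      _ = Oc * 1 * Ocᵀ := by
          rw [hDm, Matrix.diagonal_mul_diagonal]
          have : (fun i => z i * star (z i)) = fun _ => (1 : ℂ) := funext hzstar
          rw [this]
          norm_num
      _ = 1 := by rw [mul_one, hOcOct]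
  have hWHW : Wᴴ * W = 1 := mul_eq_one_comm.mp hWWH
  set Vm := Wᴴ * U with hVm
  have hUWV : U = W * Vm := by rw [hVm, ← mul_assoc, hWWH, one_mul]
  have hUUH : U * Uᴴ = 1 := by rw [← Matrix.star_eq_conjTranspose]; exact hU1
  have hVVH : Vm * Vmᴴ = 1 := by
    rw [hVm, Matrix.conjTranspose_mul (Wᴴ) U, Matrix.conjTranspose_conjTranspose W]
    calc Wᴴ * U * (Uᴴ * W) = Wᴴ * (U * Uᴴ) * W := by
          rw [mul_assoc, mul_assoc, ← mul_assoc U]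
      _ = 1 := by rw [hUUH, mul_one, hWHW]
  have hVHV : Vmᴴ * Vm = 1 := mul_eq_one_comm.mp hVVH
  have hC : (Wᴴ)ᵀ = W.map (starRingEnd ℂ) := by
    ext i j; rfl
  have hmapC : ∀ (M N : Matrix (Fin d) (Fin d) ℂ),
      (M * N).map (starRingEnd ℂ) = M.map (starRingEnd ℂ) * N.map (starRingEnd ℂ) := by
    intro M N
    ext i j
    simp [Matrix.mul_apply, Matrix.map_apply, map_sum]
  have hmapC1 : ((1 : Matrix (Fin d) (Fin d) ℂ)).map (starRingEnd ℂ) = 1 := by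
    ext i j
    by_cases hij : i = j <;> simp [Matrix.one_apply, hij]
  have hWHC : (Wᴴ).map (starRingEnd ℂ) = Wᵀ := by
    ext i j
    simp [Matrix.conjTranspose_apply, Matrix.map_apply, Matrix.transpose_apply]
  have hVVt : Vm * Vmᵀ = 1 := by
    rw [hVm, Matrix.transpose_mul, hC]
    calc Wᴴ * U * (Uᵀ * W.map (starRingEnd ℂ))
        = Wᴴ * S * W.map (starRingEnd ℂ) := by
          rw [hSdef, mul_assoc, mul_assoc, ← mul_assoc U]
      _ = Wᴴ * (W * Wᵀ) * W.map (starRingEnd ℂ) := by rw [hWWt]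
      _ = Wᵀ * W.map (starRingEnd ℂ) := by
          rw [← mul_assoc Wᴴ W Wᵀ, hWHW, one_mul]
      _ = (Wᴴ).map (starRingEnd ℂ) * W.map (starRingEnd ℂ) := by rw [hWHC]
      _ = (Wᴴ * W).map (starRingEnd ℂ) := (hmapC _ _).symm
      _ = 1 := by rw [hWHW, hmapC1]
  have hVHt : Vmᴴ = Vmᵀ := by
    calc Vmᴴ = Vmᴴ * (Vm * Vmᵀ) := by rw [hVVt, mul_one]
      _ = (Vmᴴ * Vm) * Vmᵀ := (mul_assoc Vmᴴ Vm Vmᵀ).symm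
      _ = Vmᵀ := by rw [hVHV, one_mul]
  have hreal : ∀ i j, (starRingEnd ℂ) (Vm i j) = Vm i j := by
    intro i j
    have := congrFun (congrFun hVHt j) i
    simpa [Matrix.conjTranspose_apply, Matrix.transpose_apply] using this
  set O₂ := Vm.map Complex.re with hO₂
  have hVmO₂ : Vm = O₂.map Complex.ofReal := by
    ext i j
    simp only [hO₂, Matrix.map_apply]
    exact (Complex.conj_eq_iff_re.mp (hreal i j)).symm
  have hstar₂ : star O₂ = O₂ᵀ := by
    rw [Matrix.star_eq_conjTranspose]; ext i j; simp [Matrix.conjTranspose_apply]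
  have hO₂mem : O₂ ∈ Matrix.orthogonalGroup (Fin d) ℝ := by
    rw [Matrix.mem_orthogonalGroup_iff]
    apply map_ofReal_inj
    rw [map_ofReal_mul, map_ofReal_one, ← hVmO₂, Matrix.transpose_map, ← hVmO₂]
    exact hVVt
  refine ⟨O, O₂, Dm, hOmem, hO₂mem, Matrix.isDiag_diagonal z, ?_, ?_⟩
  · intro i
    rw [hDm, Matrix.diagonal_apply_eq]
    exact hzabs i
  · calc U = W * Vm := hUWV
      _ = O.map Complex.ofReal * Dm * O₂.map Complex.ofReal := by
        rw [hW, hVmO₂, hOcdef]
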